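/- Let c : ℤ → ℤ be finitely supported such that the sum of c_i over odd indices i is even and Σ_{3 ∤ i} c_i = 0. Then for every integer k ≥ 1, writing n for the 3-adic valuation of k (the largest n with 3^n ∣ k), the integer S_{2k} = Σ_i c_i · i^{2k} is divisible by 2 · 3^{n+1}. -/

import Mathlib

lemma step_lemma (n : ℕ) (a : ℤ) (h : (3:ℤ)^(n+1) ∣ a - 1) :
    (3:ℤ)^(n+2) ∣ a^3 - 1 := by
  have h1 : (3:ℤ) ∣ a - 1 := dvd_trans (dvd_pow_self 3 (Nat.succ_ne_zero n)) h
  obtain ⟨t, ht⟩ := h1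
  have h2 : (3:ℤ) ∣ a^2 + a + 1 := ⟨3*t^2 + 3*t + 1, by linear_combination (a + 2 + 3*t) * ht⟩
  have : a^3 - 1 = (a - 1) * (a^2 + a + 1) := by ring
  rw [this, pow_succ]
  exact mul_dvd_mul h h2

lemma key_lemma (n : ℕ) (i : ℤ) (hi : ¬ (3:ℤ) ∣ i) :
    (3:ℤ)^(n+1) ∣ i^(2 * 3^n) - 1 := by
  induction n with
  | zero =>
    simp only [pow_zero, mul_one, pow_one]
    have hz : (i : ZMod 3) ≠ 0 := by
      rw [Ne, ZMod.intCast_zmod_eq_zero_iff_dvd]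
      exact_mod_cast hi
    have : ((i^2 - 1 : ℤ) : ZMod 3) = 0 := by
      push_cast
      have hall : ∀ x : ZMod 3, x ≠ 0 → x^2 - 1 = 0 := by decide
      exact hall _ hz
    exact_mod_cast (ZMod.intCast_zmod_eq_zero_iff_dvd _ 3).mp this
  | succ n ih =>
    have : i^(2 * 3^(n+1)) = (i^(2*3^n))^3 := by
      rw [← pow_mul]; ring_nf
    rw [this]
    exact step_lemma n _ ih

lemma key_lemma2 (n : ℕ) (k : ℕ) (hnk : 3^n ∣ k) (i : ℤ) (hi : ¬ (3:ℤ) ∣ i) :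
    (3:ℤ)^(n+1) ∣ i^(2*k) - 1 := by
  obtain ⟨m, hm⟩ := hnk
  have : i^(2*k) = (i^(2*3^n))^m := by rw [← pow_mul, hm]; ring_nf
  rw [this]
  calc (3:ℤ)^(n+1) ∣ i^(2*3^n) - 1 := key_lemma n i hi
    _ ∣ (i^(2*3^n))^m - 1 := by
        have := sub_dvd_pow_sub_pow (i^(2*3^n)) 1 m
        simpa using this

/-- If `c : ℤ → ℤ` is finitely supported, the sum of `c_i` over odd
indices is even and `Σ_{3 ∤ i} c_i = 0`, then for every `k ≥ 1`, with `n` the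
3-adic valuation of `k`, the integer `S_{2k} = Σ_i c_i i^{2k}` is divisible by
`2 · 3^{n+1}`. -/
theorem even_power_sum_divisibility (c : ℤ →₀ ℤ)
    (hodd : 2 ∣ ∑ i ∈ c.support.filter (fun i => Odd i), c i)
    (h3 : ∑ i ∈ c.support.filter (fun i => ¬ (3 : ℤ) ∣ i), c i = 0)
    (k : ℕ) (hk : 1 ≤ k) :
    (2 * 3 ^ (padicValNat 3 k + 1) : ℤ) ∣ ∑ i ∈ c.support, c i * i ^ (2 * k) := by
  set n := padicValNat 3 k with hn
  have hk0 : k ≠ 0 := by omega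
  have hdvdk : 3^n ∣ k := pow_padicValNat_dvd
  -- divisibility by 2
  have h2 : (2:ℤ) ∣ ∑ i ∈ c.support, c i * i ^ (2 * k) := by
    rw [← Finset.sum_filter_add_sum_filter_not c.support (fun i => Odd i)]
    apply dvd_add
    · have : ∀ i ∈ c.support.filter (fun i => Odd i),
          c i * i ^ (2*k) = c i * (i ^ (2*k) - 1) + c i := by intro i _; ring
      rw [Finset.sum_congr rfl this, Finset.sum_add_distrib]
      apply dvd_add
      · apply Finset.dvd_sum
        intro i hi
        rw [Finset.mem_filter] at hi
        have : Even (i ^ (2*k) - 1) := (hi.2.pow).sub_odd odd_one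
        exact Dvd.dvd.mul_left this.two_dvd _
      · exact hodd
    · apply Finset.dvd_sum
      intro i hi
      rw [Finset.mem_filter] at hi
      have hev : Even i := Int.not_odd_iff_even.mp hi.2
      have : (2:ℤ) ∣ i ^ (2*k) := dvd_pow hev.two_dvd (by omega)
      exact this.mul_left _
  -- divisibility by 3^(n+1)
  have h3' : ((3:ℤ)^(n+1)) ∣ ∑ i ∈ c.support, c i * i ^ (2 * k) := by
    rw [← Finset.sum_filter_add_sum_filter_not c.support (fun i => ¬ (3:ℤ) ∣ i)]
    apply dvd_add
    · have : ∀ i ∈ c.support.filter (fun i => ¬ (3:ℤ) ∣ i),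
          c i * i ^ (2*k) = c i * (i ^ (2*k) - 1) + c i := by intro i _; ring
      rw [Finset.sum_congr rfl this, Finset.sum_add_distrib, h3, add_zero]
      apply Finset.dvd_sum
      intro i hi
      rw [Finset.mem_filter] at hi
      exact (key_lemma2 n k hdvdk i hi.2).mul_left _
    · apply Finset.dvd_sum
      intro i hi
      rw [Finset.mem_filter, not_not] at hi
      have hle : n + 1 ≤ 2 * k := by
        have h1 : 3^n ≤ k := Nat.le_of_dvd (by omega) hdvdk
        have h2 : n < 3^n := Nat.lt_pow_self (by norm_num : 1 < 3)
        omega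
      have : (3:ℤ)^(n+1) ∣ i^(2*k) := by
        calc (3:ℤ)^(n+1) ∣ (3:ℤ)^(2*k) := pow_dvd_pow 3 hle
          _ ∣ i^(2*k) := pow_dvd_pow_of_dvd hi.2 _
      exact this.mul_left _
  have hcop : IsCoprime (2:ℤ) ((3:ℤ)^(n+1)) := by
    apply IsCoprime.pow_right
    rw [Int.isCoprime_iff_gcd_eq_one]
    decide
  exact hcop.mul_dvd h2 h3'
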